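/- Let l_1 = (l_{11},...,l_{1 n_1}), ..., l_r = (l_{r1},...,l_{r n_r}) be tuples of positive integers. The family of vectors v_s := (0,...,0, l_s, −l_{s+1}, 0, ..., 0) in Z^{n_1+...+n_r}, for 1 ≤ s ≤ r−1, can be completed to a Z-basis of Z^{n_1+...+n_r} if and only if the numbers gcd(l_{k1},...,l_{k n_k}), for 1 ≤ k ≤ r, are pairwise coprime. -/

import Mathlib

theorem bez {J : Type*} (t : Finset J) (f : J → ℤ) :
    ∃ c : J → ℤ, ∑ j ∈ t, c j * f j = t.gcd f := by
  classical
  induction t using Finset.induction_on with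
  | empty => exact ⟨0, by simp⟩
  | @insert a t ha ih =>
    obtain ⟨c, hc⟩ := ih
    refine ⟨fun j => if j = a then Int.gcdA (f a) (t.gcd f) else c j * Int.gcdB (f a) (t.gcd f), ?_⟩
    rw [Finset.sum_insert ha, Finset.gcd_insert]
    have h2 : gcd (f a) (t.gcd f) = (Int.gcd (f a) (t.gcd f) : ℤ) := (Int.coe_gcd _ _).symm
    rw [h2, Int.gcd_eq_gcd_ab]
    have h3 : ∀ j ∈ t, (if j = a then Int.gcdA (f a) (t.gcd f) else c j * Int.gcdB (f a) (t.gcd f)) * f j = (c j * f j) * Int.gcdB (f a) (t.gcd f) := by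
      intro j hj
      rw [if_neg (by rintro rfl; exact ha hj)]
      ring
    rw [Finset.sum_congr rfl h3, ← Finset.sum_mul, hc]
    simp only [if_true]
    ring

theorem tele (F : ℕ → ℤ) (m n : ℕ) (h : m ≤ n) :
    ∑ t ∈ Finset.Ico m n, (F t - F (t + 1)) = F m - F n := by
  induction n, h using Nat.le_induction with
  | base => simp
  | succ n hn ih => rw [Finset.sum_Ico_succ_top hn, ih]; ring

attribute [-instance] AddCommGroup.toIntModule in
theorem basis_of_retraction {E : Type*} [AddCommGroup E] [Module ℤ E]
    {ι0 : Type*} [Fintype ι0] (bE : Module.Basis ι0 ℤ E)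
    {p : ℕ} (v : Fin p → E) (Φ : E →ₗ[ℤ] (Fin p → ℤ))
    (hΦ : ∀ t, Φ (v t) = Pi.single t 1) :
    ∃ (m : ℕ) (b : Module.Basis (Fin p ⊕ Fin m) ℤ E), ∀ s, b (Sum.inl s) = v s := by
  classical
  haveI := @smulCommClass_self ℤ E _ Module.toDistribMulAction.toMulAction
  set ι : (Fin p → ℤ) →ₗ[ℤ] E := (Pi.basisFun ℤ (Fin p)).constr ℤ v with hι
  have hιs : ∀ s, ι (Pi.single s 1) = v s := by
    intro s
    have hb : (Pi.basisFun ℤ (Fin p)) s = Pi.single s 1 := by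
      ext t; simp [Pi.basisFun_apply, Pi.single_apply]
    rw [← hb]
    exact (Pi.basisFun ℤ (Fin p)).constr_basis ℤ v s
  have hΦι : ∀ c, Φ (ι c) = c := by
    intro c
    have h : Φ.comp ι = LinearMap.id := by
      apply (Pi.basisFun ℤ (Fin p)).ext
      intro s
      have hb : (Pi.basisFun ℤ (Fin p)) s = Pi.single s 1 := by
        ext t; simp [Pi.basisFun_apply, Pi.single_apply]
      rw [hb, LinearMap.comp_apply, hιs, hΦ, LinearMap.id_apply]
    calc Φ (ι c) = (Φ.comp ι) c := rfl
    _ = c := by rw [h]; rfl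
  set K := LinearMap.ker Φ with hK
  have hmem : ∀ x : E, x - ι (Φ x) ∈ K := fun x => by
    rw [hK, LinearMap.mem_ker, map_sub, hΦι, sub_self]
  set ψ := LinearMap.codRestrict K (LinearMap.id - ι.comp Φ) hmem with hψ
  set f := LinearMap.prod Φ ψ with hf
  set g := ι.comp (LinearMap.fst ℤ (Fin p → ℤ) K) + K.subtype.comp (LinearMap.snd ℤ (Fin p → ℤ) K) with hg
  have hgev : ∀ c (y : K), g (c, y) = ι c + y.1 := fun c y => rfl
  have hfg : f.comp g = LinearMap.id := by
    apply LinearMap.ext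
    rintro ⟨c, y⟩
    have hy : Φ y.1 = 0 := y.2
    have h1 : Φ (ι c + y.1) = c := by rw [map_add, hΦι, hy, add_zero]
    refine Prod.ext ?_ (Subtype.ext ?_)
    · simpa [hf, hgev] using h1
    · show (LinearMap.id - ι.comp Φ : E →ₗ[ℤ] E) (g (c, y)) = y.1
      simp only [hgev, LinearMap.sub_apply, LinearMap.id_apply, LinearMap.comp_apply, h1]
      abel
  have hgf : g.comp f = LinearMap.id := by
    apply LinearMap.ext
    intro x
    show ι (Φ x) + (x - ι (Φ x)) = x
    abel
  let e : E ≃ₗ[ℤ] ((Fin p → ℤ) × K) := LinearEquiv.ofLinear f g hfg hgf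
  obtain ⟨m, bK⟩ := Submodule.basisOfPid bE K
  refine ⟨m, ((Pi.basisFun ℤ (Fin p)).prod bK).map e.symm, fun s => ?_⟩
  have h1 : ((Pi.basisFun ℤ (Fin p)).prod bK) (Sum.inl s) = (Pi.single s 1, 0) := by
    rw [Module.Basis.prod_apply]
    simp only [Sum.elim_inl]
    refine Prod.ext ?_ rfl
    ext t; simp [Pi.basisFun_apply, Pi.single_apply]
  rw [Module.Basis.map_apply, h1]
  have h2 : e.symm (Pi.single s 1, (0 : K)) = g (Pi.single s 1, 0) := rfl
  rw [h2, hgev, hιs]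
  simp

/-- The vectors `v s` (block `s` equal to `l s`, block `s+1` equal to `-l (s+1)`, zero
elsewhere) can be completed to a `ℤ`-basis of `⊕ₖ ℤ^{n k}` iff the gcds of the tuples
`l k` are pairwise coprime. -/
theorem stmt_5 (r : ℕ) (hr : 1 ≤ r) (n : Fin r → ℕ) (hn : ∀ k, 1 ≤ n k)
    (l : (k : Fin r) → Fin (n k) → ℤ) (hl : ∀ k j, 0 < l k j)
    (v : Fin (r - 1) → ((Σ k : Fin r, Fin (n k)) → ℤ))
    (hv : ∀ (s : Fin (r - 1)) (k : Fin r) (j : Fin (n k)),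
      v s ⟨k, j⟩ =
        if k.1 = s.1 then l k j else if k.1 = s.1 + 1 then -(l k j) else 0) :
    (∃ (m : ℕ) (b : Module.Basis (Fin (r - 1) ⊕ Fin m) ℤ ((Σ k : Fin r, Fin (n k)) → ℤ)),
        ∀ s, b (Sum.inl s) = v s) ↔
      ∀ k k' : Fin r, k ≠ k' →
        IsCoprime (Finset.univ.gcd (l k)) (Finset.univ.gcd (l k')) := by
  classical
  set g : Fin r → ℤ := fun k => Finset.univ.gcd (l k) with hgdef
  constructor
  · rintro ⟨m, b, hb⟩
    have key : ∀ k k' : Fin r, k.1 < k'.1 → IsCoprime (g k) (g k') := by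
      intro k k' hlt
      set d : ℕ := Int.gcd (g k) (g k') with hd
      set S : Finset (Fin (r - 1)) :=
        Finset.univ.filter (fun s : Fin (r - 1) => k.1 ≤ s.1 ∧ s.1 < k'.1) with hS
      set u : (Σ k : Fin r, Fin (n k)) → ℤ := ∑ s ∈ S, v s with hu
      -- component formula via telescoping
      have hcomp : ∀ (a : Fin r) (j : Fin (n a)),
          u ⟨a, j⟩ = (if a.1 = k.1 then l a j else 0) - (if a.1 = k'.1 then l a j else 0) := by
        intro a j
        have h1 : u ⟨a, j⟩ = ∑ s ∈ S, v s ⟨a, j⟩ := by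
          rw [hu]; exact Finset.sum_apply _ _ _
        have h2 : ∑ s ∈ S, v s ⟨a, j⟩ =
            ∑ t ∈ Finset.Ico k.1 k'.1,
              ((if a.1 = t then l a j else 0) - (if a.1 = t + 1 then l a j else 0)) := by
          refine Finset.sum_bij' (fun s _ => s.1) (fun t ht => ⟨t, by
            simp only [Finset.mem_Ico] at ht
            have := k'.2
            omega⟩) ?_ ?_ ?_ ?_ ?_
          · intro s hs
            simp only [hS, Finset.mem_filter] at hs
            simp only [Finset.mem_Ico]
            exact hs.2
          · intro t ht
            simp only [Finset.mem_Ico] at ht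
            simp only [hS, Finset.mem_filter]
            exact ⟨Finset.mem_univ _, ht.1, ht.2⟩
          · intro s hs; rfl
          · intro t ht; rfl
          · intro s hs
            show v s ⟨a, j⟩ =
              (if a.1 = s.1 then l a j else 0) - (if a.1 = s.1 + 1 then l a j else 0)
            rw [hv]
            by_cases h1 : a.1 = s.1
            · rw [if_pos h1, if_pos h1, if_neg (by omega)]
              ring
            · rw [if_neg h1, if_neg h1]
              by_cases h2 : a.1 = s.1 + 1
              · rw [if_pos h2, if_pos h2]; ring
              · rw [if_neg h2, if_neg h2]; ring
        rw [h1, h2, tele (fun t => if a.1 = t then l a j else 0) k.1 k'.1 (le_of_lt hlt)]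
      -- divisibility of components by d
      have hdvd : ∀ i, (d : ℤ) ∣ u i := by
        rintro ⟨a, j⟩
        rw [hcomp a j]
        have hka : a.1 = k.1 → (d : ℤ) ∣ l a j := by
          intro h
          have : a = k := Fin.ext h
          subst this
          exact dvd_trans (Int.gcd_dvd_left _ _) (Finset.gcd_dvd (Finset.mem_univ j))
        have hka' : a.1 = k'.1 → (d : ℤ) ∣ l a j := by
          intro h
          have : a = k' := Fin.ext h
          subst this
          exact dvd_trans (Int.gcd_dvd_right _ _) (Finset.gcd_dvd (Finset.mem_univ j))
        by_cases h1 : a.1 = k.1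
        · rw [if_pos h1, if_neg (by omega), sub_zero]; exact hka h1
        · rw [if_neg h1, zero_sub]
          by_cases h2 : a.1 = k'.1
          · rw [if_pos h2]; exact (hka' h2).neg_right
          · rw [if_neg h2]; simp
      set w : (Σ k : Fin r, Fin (n k)) → ℤ := fun i => u i / (d : ℤ) with hw
      have huw : u = (d : ℤ) • w := by
        funext i
        rw [hw]
        simp only [Pi.smul_apply, smul_eq_mul]
        exact (Int.mul_ediv_cancel' (hdvd i)).symm
      have hk1 : k.1 < r - 1 := by
        have := k'.2; omega
      set s₀ : Fin (r - 1) := ⟨k.1, hk1⟩ with hs₀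
      have hs₀S : s₀ ∈ S := by
        simp only [hS, Finset.mem_filter]
        exact ⟨Finset.mem_univ _, le_refl _, hlt⟩
      have hrep : b.repr u (Sum.inl s₀) = 1 := by
        have : u = ∑ s ∈ S, b (Sum.inl s) := by
          rw [hu]; exact Finset.sum_congr rfl (fun s _ => (hb s).symm)
        rw [this, map_sum]
        simp only [Module.Basis.repr_self]
        rw [Finsupp.finset_sum_apply]
        have : ∀ s ∈ S, (Finsupp.single (Sum.inl s : Fin (r-1) ⊕ Fin m) (1:ℤ)) (Sum.inl s₀)
            = if s = s₀ then 1 else 0 := by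
          intro s _
          rw [Finsupp.single_apply]
          simp [Sum.inl.injEq]
        rw [Finset.sum_congr rfl this, Finset.sum_ite_eq' S s₀ (fun _ => (1:ℤ)), if_pos hs₀S]
      have hdvd1 : (d : ℤ) ∣ 1 := by
        refine ⟨b.repr w (Sum.inl s₀), ?_⟩
        rw [← hrep, huw, map_smul]
        rfl
      have : d = 1 := by
        have := Int.eq_one_of_dvd_one (by positivity) hdvd1
        exact_mod_cast this
      exact Int.isCoprime_iff_gcd_eq_one.mpr this
    intro k k' hne
    rcases lt_or_gt_of_ne (fun h : k.1 = k'.1 => hne (Fin.ext h)) with h | h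
    · exact key k k' h
    · exact (key k' k h).symm
  · intro hc
    -- Bezout coefficients for each block
    have hfk : ∀ k : Fin r, ∃ f : Fin (n k) → ℤ, ∑ j, f j * l k j = g k := fun k =>
      bez Finset.univ (l k)
    choose fk hfk using hfk
    -- CRT-style coefficients
    have hcs : ∀ s : Fin (r - 1), ∃ c : ℤ,
        (∀ k : Fin r, k.1 ≤ s.1 → g k ∣ c + 1) ∧ (∀ k : Fin r, s.1 < k.1 → g k ∣ c) := by
      intro s
      set P := ∏ k ∈ Finset.univ.filter (fun k : Fin r => k.1 ≤ s.1), g k with hP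
      set R := ∏ k ∈ Finset.univ.filter (fun k : Fin r => s.1 < k.1), g k with hR
      have hcop : IsCoprime P R := by
        rw [hP, hR]
        apply IsCoprime.prod_left
        intro k hk
        apply IsCoprime.prod_right
        intro k' hk'
        simp only [Finset.mem_filter] at hk hk'
        exact hc k k' (by
          intro h
          rw [h] at hk
          omega)
      obtain ⟨x, y, hxy⟩ := hcop
      refine ⟨-(y * R), fun k hk => ?_, fun k hk => ?_⟩
      · have : -(y * R) + 1 = x * P := by linarith
        rw [this]
        exact Dvd.dvd.mul_left
          (Finset.dvd_prod_of_mem g (by simp [Finset.mem_filter, hk])) x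
      · exact Dvd.dvd.neg_right (Dvd.dvd.mul_left
          (Finset.dvd_prod_of_mem g (by simp [Finset.mem_filter, hk])) y)
    choose cs hcs1 hcs2 using hcs
    set β : Fin (r - 1) → Fin r → ℤ :=
      fun s k => cs s + (if k.1 ≤ s.1 then 1 else 0) with hβ
    have hβdvd : ∀ s k, g k ∣ β s k := by
      intro s k
      show g k ∣ cs s + (if k.1 ≤ s.1 then 1 else 0)
      by_cases h : k.1 ≤ s.1
      · rw [if_pos h]; exact hcs1 s k h
      · rw [if_neg h, add_zero]; exact hcs2 s k (by omega)
    set α : Fin (r - 1) → Fin r → ℤ := fun s k => β s k / g k with hα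
    have hαg : ∀ s k, α s k * g k = β s k := by
      intro s k
      show β s k / g k * g k = β s k
      rw [mul_comm]
      exact Int.mul_ediv_cancel' (hβdvd s k)
    -- the retraction
    have hΦex : ∃ Φ : ((Σ k : Fin r, Fin (n k)) → ℤ) →ₗ[ℤ] (Fin (r - 1) → ℤ),
        ∀ x s, Φ x s = ∑ i : (Σ k : Fin r, Fin (n k)), α s i.1 * fk i.1 i.2 * x i :=
      ⟨{ toFun := fun x s => ∑ i : (Σ k : Fin r, Fin (n k)), α s i.1 * fk i.1 i.2 * x i
         map_add' := by
           intro x y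
           funext s
           simp only [Pi.add_apply, mul_add]
           rw [Finset.sum_add_distrib]
         map_smul' := by
           intro m x
           funext s
           simp only [Pi.smul_apply, smul_eq_mul, RingHom.id_apply]
           rw [Finset.mul_sum]
           exact Finset.sum_congr rfl (fun i _ => by ring) }, fun x s => rfl⟩
    obtain ⟨Φ, hΦap⟩ := hΦex
    have hΦv : ∀ t, Φ (v t) = Pi.single t 1 := by
      intro t
      funext s
      have ht1 : t.1 < r - 1 := t.2
      set t₀ : Fin r := ⟨t.1, by omega⟩ with ht₀
      set t₁ : Fin r := ⟨t.1 + 1, by omega⟩ with ht₁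
      have ht₀v : (t₀ : ℕ) = t.1 := rfl
      have ht₁v : (t₁ : ℕ) = t.1 + 1 := rfl
      have hne01 : t₀ ≠ t₁ := by
        intro h
        rw [Fin.ext_iff, ht₀v, ht₁v] at h
        omega
      rw [hΦap, ← Finset.univ_sigma_univ, Finset.sum_sigma]
      have hinner : ∀ k : Fin r,
          (∑ j : Fin (n k), α s k * fk k j * v t ⟨k, j⟩) =
            (if k = t₀ then α s k * g k else 0) + (if k = t₁ then -(α s k * g k) else 0) := by
        intro k
        by_cases h1 : k.1 = t.1
        · have hk : k = t₀ := Fin.ext (by rw [ht₀v]; exact h1)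
          rw [if_pos hk, if_neg (fun h => hne01 (hk ▸ h)), add_zero, ← hfk k, Finset.mul_sum]
          refine Finset.sum_congr rfl (fun j _ => ?_)
          rw [hv, if_pos h1] <;> ring
        · rw [if_neg (fun h => h1 (by rw [h]))]
          by_cases h2 : k.1 = t.1 + 1
          · have hk : k = t₁ := Fin.ext (by rw [ht₁v]; exact h2)
            rw [if_pos hk, zero_add, ← hfk k, Finset.mul_sum, ← Finset.sum_neg_distrib]
            refine Finset.sum_congr rfl (fun j _ => ?_)
            rw [hv, if_neg h1, if_pos h2] <;> ring
          · rw [if_neg (fun h => h2 (by rw [h])), add_zero]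
            refine Finset.sum_eq_zero (fun j _ => ?_)
            rw [hv, if_neg h1, if_neg h2] <;> ring
      rw [Finset.sum_congr rfl (fun k _ => hinner k), Finset.sum_add_distrib,
        Finset.sum_ite_eq' Finset.univ t₀ (fun k => α s k * g k),
        Finset.sum_ite_eq' Finset.univ t₁ (fun k => -(α s k * g k)),
        if_pos (Finset.mem_univ _), if_pos (Finset.mem_univ _), hαg, hαg]
      simp only [hβ, ht₀v, ht₁v]
      rw [Pi.single_apply]
      by_cases h : t.1 ≤ s.1
      · by_cases h' : t.1 + 1 ≤ s.1
        · rw [if_pos h, if_pos h', if_neg (by intro hh; rw [Fin.ext_iff] at hh; omega)]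
          ring
        · rw [if_pos h, if_neg h', if_pos (by apply Fin.ext; show s.1 = t.1; omega)]
          ring
      · rw [if_neg h, if_neg (by omega), if_neg (by intro hh; rw [Fin.ext_iff] at hh; omega)]
        ring
    exact basis_of_retraction (Pi.basisFun ℤ _) v Φ hΦv
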